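/- Let N, d ≥ 1. Let f : ℝ^d → ℝ^d be odd (f(−z) = −f(z) for all z) and one-sided Lipschitz with constant L_f ∈ ℝ, and let u be such that (i) for every probability measure μ the map x ↦ u(x, μ) is one-sided Lipschitz with constant L_u ∈ ℝ, and (ii) u is Lipschitz along empirical measures with constant L_ũ ≥ 0. Then for all X, Y ∈ (ℝ^d)^N, ∑_{i=1}^N ⟨X_i − Y_i, V_i(X) − V_i(Y)⟩ ≤ (2 L_f⁺ + L_u + 1/2 + L_ũ/2) ∑_{i=1}^N |X_i − Y_i|², where L_f⁺ := max{L_f, 0}. -/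

import Mathlib

open RealInnerProductSpace MeasureTheory

noncomputable def empMeas {d N : ℕ} (a : Fin N → EuclideanSpace ℝ (Fin d)) :
    Measure (EuclideanSpace ℝ (Fin d)) :=
  (N : ENNReal)⁻¹ • ∑ j, Measure.dirac (a j)

lemma empMeas_prob {d N : ℕ} (hN : 1 ≤ N) (a : Fin N → EuclideanSpace ℝ (Fin d)) :
    IsProbabilityMeasure (empMeas a) := by
  constructor
  have hN0 : (N : ENNReal) ≠ 0 := by exact_mod_cast Nat.one_le_iff_ne_zero.mp hN
  simp [empMeas, Measure.smul_apply, ENNReal.inv_mul_cancel hN0]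

theorem onesided_lipschitz_systemMap (d N : ℕ) (hd : 1 ≤ d) (hN : 1 ≤ N)
    (f : EuclideanSpace ℝ (Fin d) → EuclideanSpace ℝ (Fin d))
    (u : EuclideanSpace ℝ (Fin d) → Measure (EuclideanSpace ℝ (Fin d)) →
      EuclideanSpace ℝ (Fin d))
    (Lf Lu Lut : ℝ) (hLut : 0 ≤ Lut)
    (hodd : ∀ z : EuclideanSpace ℝ (Fin d), f (-z) = -f z)
    (hf : ∀ z z' : EuclideanSpace ℝ (Fin d), ⟪z - z', f z - f z'⟫ ≤ Lf * ‖z - z'‖ ^ 2)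
    (hu : ∀ μ : Measure (EuclideanSpace ℝ (Fin d)), IsProbabilityMeasure μ →
      ∀ x x' : EuclideanSpace ℝ (Fin d), ⟪x - x', u x μ - u x' μ⟫ ≤ Lu * ‖x - x'‖ ^ 2)
    (huemp : ∀ (x : EuclideanSpace ℝ (Fin d)) (a b : Fin N → EuclideanSpace ℝ (Fin d)),
      ‖u x (empMeas a) - u x (empMeas b)‖ ^ 2 ≤ Lut / N * ∑ j, ‖a j - b j‖ ^ 2) :
    ∀ X Y : Fin N → EuclideanSpace ℝ (Fin d),
      ∑ i, ⟪X i - Y i,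
          (u (X i) (empMeas X) + (N : ℝ)⁻¹ • ∑ j, f (X i - X j))
            - (u (Y i) (empMeas Y) + (N : ℝ)⁻¹ • ∑ j, f (Y i - Y j))⟫
        ≤ (2 * max Lf 0 + Lu + 1 / 2 + Lut / 2) * ∑ i, ‖X i - Y i‖ ^ 2 := by
  intro X Y
  have hNpos : (0:ℝ) < N := by exact_mod_cast hN
  have hX : IsProbabilityMeasure (empMeas X) := empMeas_prob hN X
  set Z : Fin N → EuclideanSpace ℝ (Fin d) := fun i => X i - Y i with hZdef
  set S : ℝ := ∑ i, ‖Z i‖ ^ 2 with hSdef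
  have hSnn : 0 ≤ S := Finset.sum_nonneg fun i _ => sq_nonneg _
  set g : Fin N → Fin N → EuclideanSpace ℝ (Fin d) :=
    fun i j => f (X i - X j) - f (Y i - Y j) with hgdef
  -- split the inner product
  have hsplit : ∀ i, ⟪X i - Y i,
          (u (X i) (empMeas X) + (N : ℝ)⁻¹ • ∑ j, f (X i - X j))
            - (u (Y i) (empMeas Y) + (N : ℝ)⁻¹ • ∑ j, f (Y i - Y j))⟫
      = ⟪Z i, u (X i) (empMeas X) - u (Y i) (empMeas Y)⟫
        + (N : ℝ)⁻¹ * ∑ j, ⟪Z i, g i j⟫ := by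
    intro i
    have hre : (u (X i) (empMeas X) + (N : ℝ)⁻¹ • ∑ j, f (X i - X j))
            - (u (Y i) (empMeas Y) + (N : ℝ)⁻¹ • ∑ j, f (Y i - Y j))
        = (u (X i) (empMeas X) - u (Y i) (empMeas Y)) + (N : ℝ)⁻¹ • ∑ j, g i j := by
      rw [hgdef]
      rw [Finset.sum_sub_distrib]
      module
    rw [hre, inner_add_right, real_inner_smul_right, inner_sum]
  rw [Finset.sum_congr rfl fun i _ => hsplit i, Finset.sum_add_distrib]
  -- Part A : the u-part
  have hA : ∑ i, ⟪Z i, u (X i) (empMeas X) - u (Y i) (empMeas Y)⟫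
      ≤ (Lu + 1/2 + Lut/2) * S := by
    have hterm : ∀ i, ⟪Z i, u (X i) (empMeas X) - u (Y i) (empMeas Y)⟫
        ≤ (Lu + 1/2) * ‖Z i‖ ^ 2 + Lut / (2*N) * S := by
      intro i
      have hdecomp : u (X i) (empMeas X) - u (Y i) (empMeas Y)
          = (u (X i) (empMeas X) - u (Y i) (empMeas X))
            + (u (Y i) (empMeas X) - u (Y i) (empMeas Y)) := by abel
      rw [hdecomp, inner_add_right]
      have h1 : ⟪Z i, u (X i) (empMeas X) - u (Y i) (empMeas X)⟫ ≤ Lu * ‖Z i‖ ^ 2 :=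
        hu (empMeas X) hX (X i) (Y i)
      have h2 : ⟪Z i, u (Y i) (empMeas X) - u (Y i) (empMeas Y)⟫
          ≤ 1/2 * ‖Z i‖ ^ 2 + Lut / (2*N) * S := by
        have hle := real_inner_le_norm (Z i) (u (Y i) (empMeas X) - u (Y i) (empMeas Y))
        have hwS : ‖u (Y i) (empMeas X) - u (Y i) (empMeas Y)‖ ^ 2 ≤ Lut / N * S :=
          huemp (Y i) X Y
        have hhalf : Lut / (2*N) * S = 1/2 * (Lut / N * S) := by
          field_simp
        rw [hhalf]
        nlinarith [sq_nonneg (‖Z i‖ - ‖u (Y i) (empMeas X) - u (Y i) (empMeas Y)‖)]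
      linarith
    calc ∑ i, ⟪Z i, u (X i) (empMeas X) - u (Y i) (empMeas Y)⟫
        ≤ ∑ i, ((Lu + 1/2) * ‖Z i‖ ^ 2 + Lut / (2*N) * S) :=
          Finset.sum_le_sum fun i _ => hterm i
      _ = (Lu + 1/2) * S + N * (Lut / (2*N) * S) := by
          rw [Finset.sum_add_distrib, ← Finset.mul_sum, Finset.sum_const, Finset.card_univ]
          simp [hSdef, nsmul_eq_mul]
      _ = (Lu + 1/2 + Lut/2) * S := by field_simp
  -- Part B : the f-part
  have hB : ∑ i, (N : ℝ)⁻¹ * ∑ j, ⟪Z i, g i j⟫ ≤ 2 * max Lf 0 * S := by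
    have hanti : ∀ i j, g j i = - g i j := by
      intro i j
      have h1 : X j - X i = -(X i - X j) := by abel
      have h2 : Y j - Y i = -(Y i - Y j) := by abel
      simp only [hgdef]
      rw [h1, h2, hodd, hodd]
      abel
    set T : ℝ := ∑ i, ∑ j, ⟪Z i, g i j⟫ with hTdef
    have hT2 : 2 * T = ∑ i, ∑ j, ⟪Z i - Z j, g i j⟫ := by
      have hswap : T = - ∑ i, ∑ j, ⟪Z j, g i j⟫ := by
        rw [hTdef, Finset.sum_comm]
        rw [← Finset.sum_neg_distrib]
        congr 1; ext i
        rw [← Finset.sum_neg_distrib]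
        congr 1; ext j
        rw [hanti i j, inner_neg_right]
      have : 2 * T = T + T := by ring
      rw [this]
      nth_rewrite 2 [hswap]
      rw [hTdef, ← sub_eq_add_neg, ← Finset.sum_sub_distrib]
      refine Finset.sum_congr rfl fun i _ => ?_
      rw [← Finset.sum_sub_distrib]
      refine Finset.sum_congr rfl fun j _ => ?_
      exact (inner_sub_left (Z i) (Z j) (g i j)).symm
    have hpair : ∀ i j, ⟪Z i - Z j, g i j⟫ ≤ max Lf 0 * (2*‖Z i‖^2 + 2*‖Z j‖^2) := by
      intro i j
      have he : Z i - Z j = (X i - X j) - (Y i - Y j) := by simp [hZdef]; abel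
      have h1 := hf (X i - X j) (Y i - Y j)
      have h2 : Lf * ‖(X i - X j) - (Y i - Y j)‖ ^ 2 ≤ max Lf 0 * ‖Z i - Z j‖ ^ 2 := by
        rw [he]
        exact mul_le_mul_of_nonneg_right (le_max_left _ _) (sq_nonneg _)
      have h3 : ‖Z i - Z j‖ ^ 2 ≤ 2*‖Z i‖^2 + 2*‖Z j‖^2 := by
        have hsq := norm_sub_sq_real (Z i) (Z j)
        have habs := abs_real_inner_le_norm (Z i) (Z j)
        have hnl := neg_abs_le ⟪Z i, Z j⟫
        nlinarith [sq_nonneg (‖Z i‖ - ‖Z j‖), abs_nonneg ⟪Z i, Z j⟫]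
      have h4 : max Lf 0 * ‖Z i - Z j‖ ^ 2 ≤ max Lf 0 * (2*‖Z i‖^2 + 2*‖Z j‖^2) :=
        mul_le_mul_of_nonneg_left h3 (le_max_right _ _)
      calc ⟪Z i - Z j, g i j⟫ = ⟪(X i - X j) - (Y i - Y j), g i j⟫ := by rw [he]
        _ ≤ Lf * ‖(X i - X j) - (Y i - Y j)‖ ^ 2 := h1
        _ ≤ max Lf 0 * ‖Z i - Z j‖ ^ 2 := h2
        _ ≤ _ := h4
    have hTle : 2 * T ≤ max Lf 0 * (4 * N * S) := by
      rw [hT2]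
      calc ∑ i, ∑ j, ⟪Z i - Z j, g i j⟫
          ≤ ∑ i, ∑ j, max Lf 0 * (2*‖Z i‖^2 + 2*‖Z j‖^2) :=
            Finset.sum_le_sum fun i _ => Finset.sum_le_sum fun j _ => hpair i j
        _ = max Lf 0 * (4 * N * S) := by
            rw [← Finset.sum_product']
            rw [← Finset.mul_sum]
            congr 1
            rw [Finset.sum_product]
            have : ∀ i : Fin N, ∑ j, (2*‖Z i‖^2 + 2*‖Z j‖^2)
                = N * (2*‖Z i‖^2) + 2 * S := by
              intro i
              rw [Finset.sum_add_distrib, Finset.sum_const, Finset.card_univ,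
                ← Finset.mul_sum, ← hSdef]
              simp [nsmul_eq_mul]
            rw [Finset.sum_congr rfl fun i _ => this i, Finset.sum_add_distrib,
              Finset.sum_const, Finset.card_univ, ← Finset.mul_sum]
            simp only [nsmul_eq_mul, hSdef, Fintype.card_fin]
            rw [← Finset.mul_sum]
            ring
    calc ∑ i, (N : ℝ)⁻¹ * ∑ j, ⟪Z i, g i j⟫ = (N:ℝ)⁻¹ * T := by
          rw [hTdef, Finset.mul_sum]
      _ ≤ (N:ℝ)⁻¹ * (max Lf 0 * (2 * N * S)) := by
          apply mul_le_mul_of_nonneg_left _ (by positivity)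
          nlinarith
      _ = 2 * max Lf 0 * S := by field_simp
  have hfin : (2 * max Lf 0 + Lu + 1 / 2 + Lut / 2) * ∑ i, ‖X i - Y i‖ ^ 2
      = (Lu + 1/2 + Lut/2) * S + 2 * max Lf 0 * S := by
    rw [hSdef]; ring
  rw [hfin]
  exact add_le_add hA hB
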